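/- The weak-dependently-precedes relation WDP is contained in the weak-doesn't-commute relation DC: if e WDP e' then e DC e'. Consequently every DC-race is a WDP-race. -/

import Mathlib

/-- Operations an event can perform. -/
inductive Op where
  | write : ℕ → Op
  | read : ℕ → Op
  | acquire : ℕ → Op
  | release : ℕ → Op
  | branch : Op
  deriving DecidableEq

/-- An event of an execution trace: a unique identifier, a thread identifier, and an operation. -/
structure Event where
  id : ℕ
  tid : ℕ
  op : Op
  deriving DecidableEq

/-- An execution trace is a finite sequence of events. -/
abbrev Trace := List Event

/-- Trace order: `e1` occurs strictly before `e2` in `tr`. -/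
def trOrder (tr : Trace) (e1 e2 : Event) : Prop :=
  ∃ i j : Fin tr.length, i < j ∧ tr.get i = e1 ∧ tr.get j = e2

/-- Program order: trace order restricted to events of the same thread. -/
def PO (tr : Trace) (e1 e2 : Event) : Prop :=
  trOrder tr e1 e2 ∧ e1.tid = e2.tid

/-- One step of the lock-state machine: which thread holds each lock. -/
def lockStep (h : ℕ → Option ℕ) (e : Event) : ℕ → Option ℕ :=
  match e.op with
  | Op.acquire m => fun l => if l = m then some e.tid else h l
  | Op.release m => fun l => if l = m then none else h l
  | _ => h

/-- Which thread (if any) holds each lock after executing all of `tr`. -/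
def heldAfter (tr : Trace) : ℕ → Option ℕ :=
  tr.foldl lockStep (fun _ => none)

/-- Well-formedness: a thread may only acquire an unheld lock and
may only release a lock that it currently holds. -/
def WellFormed (tr : Trace) : Prop :=
  ∀ p e s, tr = p ++ e :: s →
    (∀ m, e.op = Op.acquire m → heldAfter p m = none) ∧
    (∀ m, e.op = Op.release m → heldAfter p m = some e.tid)

/-- `r` is the release ending the critical section started by acquire `a` in `tr`:
the first release of the same lock after `a`, by the same thread. -/
def MatchingRelease (tr : Trace) (a r : Event) : Prop :=
  ∃ m, a.op = Op.acquire m ∧ r.op = Op.release m ∧ r.tid = a.tid ∧ trOrder tr a r ∧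
    ∀ e, e.op = Op.release m → trOrder tr a e → trOrder tr e r → False

def isRead (e : Event) : Prop := ∃ x, e.op = Op.read x
def isWrite (e : Event) : Prop := ∃ x, e.op = Op.write x
def isAccess (e : Event) (x : ℕ) : Prop := e.op = Op.write x ∨ e.op = Op.read x

/-- Two events conflict: same variable, different threads, at least one write. -/
def Conflicts (e1 e2 : Event) : Prop :=
  ∃ x, isAccess e1 x ∧ isAccess e2 x ∧ e1.tid ≠ e2.tid ∧
    (e1.op = Op.write x ∨ e2.op = Op.write x)

/-- Happens-before: the smallest transitive relation containing program order and
ordering every release of a lock to every later acquire of the same lock. -/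
inductive HB (tr : Trace) : Event → Event → Prop where
  | po : ∀ e1 e2, PO tr e1 e2 → HB tr e1 e2
  | relacq : ∀ r a m, r.op = Op.release m → a.op = Op.acquire m → trOrder tr r a →
      HB tr r a
  | trans : ∀ e1 e2 e3, HB tr e1 e2 → HB tr e2 e3 → HB tr e1 e3

/-- `e` belongs to the critical section ended by release `r`
(including the bounding acquire and release). -/
def InCS (tr : Trace) (r e : Event) : Prop :=
  ∃ a, MatchingRelease tr a r ∧
    (e = a ∨ e = r ∨ (trOrder tr a e ∧ trOrder tr e r ∧ e.tid = a.tid))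

/-- `w` is the last writer of read `r` in trace `tr`. -/
def LastWr (tr : Trace) (r w : Event) : Prop :=
  ∃ x, r.op = Op.read x ∧ w.op = Op.write x ∧ trOrder tr w r ∧
    ∀ w', w'.op = Op.write x → ¬ (trOrder tr w w' ∧ trOrder tr w' r)

/-- Causal reads with respect to observed trace `tr`, branch-dependence `dep`,
and the set `S` of events of a candidate reordered trace: a read is causal if some
branch in `S` PO-follows it and depends on it, or (inductively) its value flows to
a same-thread later write in `S` that is the last writer of a causal read. -/
inductive CausalRead (tr : Trace) (dep : Event → Event → Prop) (S : Event → Prop) :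
    Event → Prop where
  | branch : ∀ e b, isRead e → S b → b.op = Op.branch → PO tr e b → dep b e →
      CausalRead tr dep S e
  | flow : ∀ e w r, isRead e → S w → isWrite w → PO tr e w → LastWr tr r w →
      CausalRead tr dep S r → CausalRead tr dep S e

/-- `tr'` is a predictable trace of `tr`: it contains only events of `tr` and
satisfies the PO, last-writer (LW), and lock-semantics (LS) rules. -/
structure Predictable (dep : Event → Event → Prop) (tr tr' : Trace) : Prop where
  sub : ∀ e ∈ tr', e ∈ tr
  po_rule : ∀ e1 e2, PO tr e1 e2 → trOrder tr' e1 e2 ∨ e2 ∉ tr'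
  lw_rule : ∀ e, e ∈ tr' → CausalRead tr dep (fun x => x ∈ tr') e →
      ∀ w, LastWr tr' e w ↔ LastWr tr e w
  ls_rule : ∀ a1 a2 m, a1.op = Op.acquire m → a2.op = Op.acquire m →
      trOrder tr' a1 a2 →
      ∃ r, MatchingRelease tr a1 r ∧ trOrder tr' a1 r ∧ trOrder tr' r a2

/-- Lock `m` is held at event `e` by its executing thread. -/
def HeldAt (tr : Trace) (e : Event) (m : ℕ) : Prop :=
  ∃ a r, a.op = Op.acquire m ∧ a.tid = e.tid ∧ MatchingRelease tr a r ∧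
    trOrder tr a e ∧ trOrder tr e r

/-- The locksets of `e1` and `e2` are disjoint. -/
def NoCommonLock (tr : Trace) (e1 e2 : Event) : Prop :=
  ∀ m, ¬ (HeldAt tr e1 m ∧ HeldAt tr e2 m)

/-- `e1` and `e2` are consecutive in `tr` (with `e1` first). -/
def Consecutive (tr : Trace) (e1 e2 : Event) : Prop :=
  trOrder tr e1 e2 ∧ ¬ ∃ e, trOrder tr e1 e ∧ trOrder tr e e2

/-- Weak-causally-precedes. -/
inductive WCP (tr : Trace) : Event → Event → Prop where
  | ccs : ∀ r1 r2 e1 e2 m, r1.op = Op.release m → r2.op = Op.release m →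
      trOrder tr r1 r2 → InCS tr r1 e1 → InCS tr r2 e2 → Conflicts e1 e2 →
      WCP tr r1 e2
  | hb_left : ∀ e1 e2 e3, HB tr e1 e2 → WCP tr e2 e3 → WCP tr e1 e3
  | hb_right : ∀ e1 e2 e3, WCP tr e1 e2 → HB tr e2 e3 → WCP tr e1 e3
  | acqrel : ∀ a r r' m, a.op = Op.acquire m → r.op = Op.release m →
      WCP tr a r → MatchingRelease tr a r' → WCP tr r' r
  | trans : ∀ e1 e2 e3, WCP tr e1 e2 → WCP tr e2 e3 → WCP tr e1 e3

/-- Strong-dependently-precedes. -/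
inductive SDP (tr : Trace) : Event → Event → Prop where
  | ccs : ∀ r1 r2 e1 e2 m, r1.op = Op.release m → r2.op = Op.release m →
      trOrder tr r1 r2 → InCS tr r1 e1 → InCS tr r2 e2 → Conflicts e1 e2 →
      (isRead e1 ∨ isRead e2) → SDP tr r1 e2
  | wwr : ∀ r1 r2 e1 e2 e3 m x, r1.op = Op.release m → r2.op = Op.release m →
      trOrder tr r1 r2 → InCS tr r1 e1 → InCS tr r2 e2 →
      e1.op = Op.write x → e2.op = Op.write x → e1.tid ≠ e2.tid →
      e3.op = Op.read x → PO tr e2 e3 → SDP tr r1 e3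
  | hb_left : ∀ e1 e2 e3, HB tr e1 e2 → SDP tr e2 e3 → SDP tr e1 e3
  | hb_right : ∀ e1 e2 e3, SDP tr e1 e2 → HB tr e2 e3 → SDP tr e1 e3
  | acqrel : ∀ a r r' m, a.op = Op.acquire m → r.op = Op.release m →
      SDP tr a r → MatchingRelease tr a r' → SDP tr r' r
  | trans : ∀ e1 e2 e3, SDP tr e1 e2 → SDP tr e2 e3 → SDP tr e1 e3

/-- Weak-doesn't-commute (DC). -/
inductive DC (tr : Trace) : Event → Event → Prop where
  | ccs : ∀ r1 r2 e1 e2 m, r1.op = Op.release m → r2.op = Op.release m →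
      trOrder tr r1 r2 → InCS tr r1 e1 → InCS tr r2 e2 → Conflicts e1 e2 →
      DC tr r1 e2
  | po : ∀ e1 e2, PO tr e1 e2 → DC tr e1 e2
  | acqrel : ∀ a r r' m, a.op = Op.acquire m → r.op = Op.release m →
      DC tr a r → MatchingRelease tr a r' → DC tr r' r
  | trans : ∀ e1 e2 e3, DC tr e1 e2 → DC tr e2 e3 → DC tr e1 e3

/-- Weak-dependently-precedes, parameterized by branch dependence `dep b r`. -/
inductive WDP (tr : Trace) (dep : Event → Event → Prop) : Event → Event → Prop where
  | wrbr : ∀ r1 r2 e1 e2 b m, r1.op = Op.release m → r2.op = Op.release m →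
      trOrder tr r1 r2 → InCS tr r1 e1 → InCS tr r2 e2 → LastWr tr e2 e1 →
      b.op = Op.branch → PO tr e2 b → dep b e2 → WDP tr dep r1 b
  | po : ∀ e1 e2, PO tr e1 e2 → WDP tr dep e1 e2
  | acqrel : ∀ a r r' m, a.op = Op.acquire m → r.op = Op.release m →
      WDP tr dep a r → MatchingRelease tr a r' → WDP tr dep r' r
  | trans : ∀ e1 e2 e3, WDP tr dep e1 e2 → WDP tr dep e2 e3 → WDP tr dep e1 e3

def WCPRace (tr : Trace) (e1 e2 : Event) : Prop :=
  trOrder tr e1 e2 ∧ Conflicts e1 e2 ∧ ¬ (WCP tr e1 e2 ∨ PO tr e1 e2) ∧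
    NoCommonLock tr e1 e2

def SDPRace (tr : Trace) (e1 e2 : Event) : Prop :=
  trOrder tr e1 e2 ∧ Conflicts e1 e2 ∧ ¬ (SDP tr e1 e2 ∨ PO tr e1 e2) ∧
    NoCommonLock tr e1 e2

def DCRace (tr : Trace) (e1 e2 : Event) : Prop :=
  trOrder tr e1 e2 ∧ Conflicts e1 e2 ∧ ¬ DC tr e1 e2

def WDPRace (tr : Trace) (dep : Event → Event → Prop) (e1 e2 : Event) : Prop :=
  trOrder tr e1 e2 ∧ Conflicts e1 e2 ∧ ¬ WDP tr dep e1 e2 ∧ NoCommonLock tr e1 e2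

/-- `tr` has a predictable race: some predictable trace has two conflicting
events consecutive. -/
def HasPredRace (dep : Event → Event → Prop) (tr : Trace) : Prop :=
  ∃ tr' e1 e2, Predictable dep tr tr' ∧ Conflicts e1 e2 ∧ Consecutive tr' e1 e2

/-- `tr'` exhibits a deadlock with respect to `tr`: a cycle of at least two threads,
each holding a lock at the end of `tr'` while its next event in `tr` is an acquire of
the next thread's lock. -/
def Deadlocked (tr tr' : Trace) : Prop :=
  ∃ n, 2 ≤ n ∧ ∃ t m : ℕ → ℕ,
    (∀ i j, i < n → j < n → t i = t j → i = j) ∧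
    ∀ i < n,
      heldAfter tr' (m i) = some (t i) ∧
      ∃ a ∈ tr, a ∉ tr' ∧ a.tid = t i ∧ a.op = Op.acquire (m ((i + 1) % n)) ∧
        ∀ e ∈ tr, e.tid = t i → trOrder tr e a → e ∈ tr'

/-- `tr` has a predictable deadlock. -/
def HasPredDeadlock (dep : Event → Event → Prop) (tr : Trace) : Prop :=
  ∃ tr', Predictable dep tr tr' ∧ Deadlocked tr tr'
lemma trOrder_mem_left {tr : Trace} {e1 e2 : Event} (h : trOrder tr e1 e2) : e1 ∈ tr := by
  obtain ⟨i, j, _, h1, _⟩ := h; exact h1 ▸ tr.get_mem i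

lemma trOrder_mem_right {tr : Trace} {e1 e2 : Event} (h : trOrder tr e1 e2) : e2 ∈ tr := by
  obtain ⟨i, j, _, _, h2⟩ := h; exact h2 ▸ tr.get_mem j

lemma trOrder_trans {tr : Trace} (hnd : tr.Nodup) {e1 e2 e3 : Event}
    (h : trOrder tr e1 e2) (h' : trOrder tr e2 e3) : trOrder tr e1 e3 := by
  obtain ⟨i, j, hij, h1, h2⟩ := h
  obtain ⟨k, l, hkl, h3, h4⟩ := h'
  have : j = k := (List.nodup_iff_injective_get.mp hnd) (h2.trans h3.symm)
  exact ⟨i, l, lt_trans (this ▸ hij) hkl, h1, h4⟩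

lemma trOrder_irrefl {tr : Trace} (hnd : tr.Nodup) {e : Event}
    (h : trOrder tr e e) : False := by
  obtain ⟨i, j, hij, h1, h2⟩ := h
  exact absurd ((List.nodup_iff_injective_get.mp hnd) (h1.trans h2.symm)) (Fin.ne_of_lt hij)

lemma trOrder_total {tr : Trace} (hnd : tr.Nodup) {e1 e2 : Event}
    (h1 : e1 ∈ tr) (h2 : e2 ∈ tr) (hne : e1 ≠ e2) :
    trOrder tr e1 e2 ∨ trOrder tr e2 e1 := by
  obtain ⟨i, hi⟩ := List.mem_iff_get.mp h1
  obtain ⟨j, hj⟩ := List.mem_iff_get.mp h2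
  rcases lt_trichotomy i j with h | h | h
  · exact Or.inl ⟨i, j, h, hi, hj⟩
  · exact absurd (by rw [← hi, ← hj, h]) hne
  · exact Or.inr ⟨j, i, h, hj, hi⟩

/-- If `r1` is a release of `m` before `r2`, and `a2` begins the CS of `r2`,
then `r1` precedes `a2`. -/
lemma rel_before_acq {tr : Trace} (hnd : tr.Nodup) {r1 a2 r2 : Event} {m : ℕ}
    (hr1 : r1.op = Op.release m) (hr2m : r2.op = Op.release m)
    (hmr : MatchingRelease tr a2 r2)
    (h12 : trOrder tr r1 r2) : trOrder tr r1 a2 := by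
  obtain ⟨m', ha2, hr2, _, har, hmin⟩ := hmr
  have hm : m' = m := by rw [hr2m] at hr2; injection hr2 with h; omega
  subst hm
  have hne : r1 ≠ a2 := by intro h; rw [h, ha2] at hr1; exact Op.noConfusion hr1
  rcases trOrder_total hnd (trOrder_mem_left h12) (trOrder_mem_left har) hne with h | h
  · exact h
  · exact absurd h12 (fun h' => hmin r1 hr1 h h')

/-- WDP is contained in DC; consequently every DC-race is a WDP-race. -/
theorem stmt9 (tr : Trace) (hwf : WellFormed tr) (hnd : tr.Nodup)
    (dep : Event → Event → Prop) :
    (∀ e1 e2, WDP tr dep e1 e2 → DC tr e1 e2) ∧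
    (∀ e1 e2, DCRace tr e1 e2 → WDPRace tr dep e1 e2) := by
  have hsub : ∀ e1 e2, WDP tr dep e1 e2 → DC tr e1 e2 := by
    intro e1 e2 h
    induction h with
    | wrbr r1 r2 e1 e2 b m hr1 hr2 h12 hcs1 hcs2 hlw hb hpo hdep =>
      obtain ⟨x, he2r, he1w, hwr, _⟩ := hlw
      by_cases htid : e1.tid = e2.tid
      · -- same thread: r1 PO e2 PO b
        have hr1tid : r1.tid = e1.tid := by
          obtain ⟨a1, ⟨m1, _, _, hrtid, _, _⟩, hc⟩ := hcs1
          rcases hc with rfl | rfl | ⟨_, _, ht⟩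
          · exact hrtid
          · rfl
          · rw [hrtid, ht]
        have hr1e2 : trOrder tr r1 e2 := by
          obtain ⟨a2, hmr2, hc⟩ := hcs2
          obtain ⟨m2, ha2op, -, -, -, -⟩ := id hmr2
          rcases hc with rfl | rfl | ⟨h1, _, _⟩
          · rw [ha2op] at he2r; exact Op.noConfusion he2r
          · exact h12
          · exact trOrder_trans hnd (rel_before_acq hnd hr1 hr2 hmr2 h12) h1
        have hpe : PO tr r1 e2 := ⟨hr1e2, by rw [hr1tid, htid]⟩
        exact DC.trans _ _ _ (DC.po _ _ hpe) (DC.po _ _ hpo)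
      · -- different threads: conflicting critical sections
        have hconf : Conflicts e1 e2 :=
          ⟨x, Or.inl he1w, Or.inr he2r, htid, Or.inl he1w⟩
        exact DC.trans _ _ _ (DC.ccs r1 r2 e1 e2 m hr1 hr2 h12 hcs1 hcs2 hconf)
          (DC.po _ _ hpo)
    | po e1 e2 h => exact DC.po _ _ h
    | acqrel a r r' m ha hr _ hmr ih => exact DC.acqrel a r r' m ha hr ih hmr
    | trans e1 e2 e3 _ _ ih1 ih2 => exact DC.trans _ _ _ ih1 ih2
  refine ⟨hsub, ?_⟩
  rintro e1 e2 ⟨hord, hconf, hndc⟩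
  refine ⟨hord, hconf, fun h => hndc (hsub _ _ h), ?_⟩
  -- NoCommonLock from ¬ DC
  rintro m ⟨⟨a1, r1, ha1, ht1, hmr1, hae1, her1⟩, ⟨a2, r2, ha2, ht2, hmr2, hae2, her2⟩⟩
  obtain ⟨m1, ha1', hr1op, hr1tid, _, hmin1⟩ := hmr1
  obtain ⟨m2, ha2', hr2op, hr2tid, _, hmin2⟩ := hmr2
  have hm1 : m1 = m := by rw [ha1] at ha1'; injection ha1' with h; omega
  have hm2 : m2 = m := by rw [ha2] at ha2'; injection ha2' with h; omega
  rw [hm1] at hr1op hmin1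
  rw [hm2] at hr2op hmin2
  have htne : e1.tid ≠ e2.tid := by obtain ⟨_, _, _, h, _⟩ := hconf; exact h
  have hrne : r1 ≠ r2 := by
    intro h
    apply htne
    rw [← ht1, ← hr1tid, h, hr2tid, ht2]
  rcases trOrder_total hnd (trOrder_mem_right her1) (trOrder_mem_right her2) hrne with h | h
  · -- r1 < r2 : DC e1 e2 via po + ccs
    apply hndc
    have hcs1 : InCS tr r1 e1 :=
      ⟨a1, ⟨m, ha1, hr1op, hr1tid, trOrder_trans hnd hae1 her1, hmin1⟩,
        Or.inr (Or.inr ⟨hae1, her1, ht1.symm⟩)⟩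
    have hcs2 : InCS tr r2 e2 :=
      ⟨a2, ⟨m, ha2, hr2op, hr2tid, trOrder_trans hnd hae2 her2, hmin2⟩,
        Or.inr (Or.inr ⟨hae2, her2, ht2.symm⟩)⟩
    exact DC.trans _ _ _ (DC.po _ _ ⟨her1, by rw [hr1tid, ht1]⟩)
      (DC.ccs r1 r2 e1 e2 m hr1op hr2op h hcs1 hcs2 hconf)
  · -- r2 < r1 : impossible
    have hane : a1 ≠ r2 := by
      intro hh; rw [hh, hr2op] at ha1; exact Op.noConfusion ha1
    rcases trOrder_total hnd (trOrder_mem_left hae1) (trOrder_mem_left h) hane with h' | h'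
    · exact hmin1 r2 hr2op h' h
    · exact trOrder_irrefl hnd
        (trOrder_trans hnd (trOrder_trans hnd (trOrder_trans hnd hord her2) h') hae1)
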